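/- For all â, b̂ ∈ ℝ, the matrix exponential of the source matrix B(â,b̂) equals the explicit matrix Exp(â,b̂): exp(B(â,b̂)) = Exp(â,b̂). -/

import Mathlib

noncomputable section

/-- The source matrix `B(a,b)` of the Ten-Moment body-force source term. -/
def srcB (a b : ℝ) : Matrix (Fin 6) (Fin 6) ℝ :=
  !![0, 0, 0, 0, 0, 0;
     a, 0, 0, 0, 0, 0;
     b, 0, 0, 0, 0, 0;
     0, a, 0, 0, 0, 0;
     0, b / 2, a / 2, 0, 0, 0;
     0, 0, b, 0, 0, 0]

/-- The explicit exponential matrix of the source operator. -/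
def ExpM (a b : ℝ) : Matrix (Fin 6) (Fin 6) ℝ :=
  !![1, 0, 0, 0, 0, 0;
     a, 1, 0, 0, 0, 0;
     b, 0, 1, 0, 0, 0;
     a ^ 2 / 2, a, 0, 1, 0, 0;
     a * b / 2, b / 2, a / 2, 0, 1, 0;
     b ^ 2 / 2, 0, b, 0, 0, 1]

@[simp] lemma cons_val_five' {α : Type*} {m : ℕ} (x : α)
    (u : Fin m.succ.succ.succ.succ.succ → α) :
    Matrix.vecCons x u 5 =
      Matrix.vecHead (Matrix.vecTail (Matrix.vecTail (Matrix.vecTail (Matrix.vecTail u)))) :=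
  rfl

theorem exp_of_cube_eq_zero {𝔸 : Type*} [Ring 𝔸] [Algebra ℝ 𝔸] [TopologicalSpace 𝔸]
    [IsTopologicalRing 𝔸] [T2Space 𝔸] (x : 𝔸) (h : x ^ 3 = 0) :
    NormedSpace.exp x = 1 + x + (2⁻¹ : ℝ) • x ^ 2 := by
  rw [NormedSpace.exp_eq_tsum ℝ]
  dsimp only
  have hzero : ∀ n ∉ Finset.range 3, (Nat.factorial n : ℝ)⁻¹ • x ^ n = 0 := by
    intro n hn
    simp only [Finset.mem_range, not_lt] at hn
    have : x ^ n = 0 := by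
      calc x ^ n = x ^ 3 * x ^ (n - 3) := by rw [← pow_add]; congr 1; omega
        _ = 0 := by rw [h, zero_mul]
    rw [this, smul_zero]
  rw [tsum_eq_sum hzero]
  simp [Finset.sum_range_succ, Nat.factorial]

set_option maxHeartbeats 1600000 in
/-- The matrix exponential of the source matrix `B(â,b̂)` is the explicit
matrix `Exp(â,b̂)`. -/
theorem exp_srcB_eq_expM (a b : ℝ) :
    NormedSpace.exp (srcB a b) = ExpM a b := by
  have hsq : srcB a b ^ 2 = !![0, 0, 0, 0, 0, 0;
     0, 0, 0, 0, 0, 0;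
     0, 0, 0, 0, 0, 0;
     a ^ 2, 0, 0, 0, 0, 0;
     a * b, 0, 0, 0, 0, 0;
     b ^ 2, 0, 0, 0, 0, 0] := by
    rw [sq]
    ext i j
    fin_cases i <;> fin_cases j <;>
      · simp [srcB, Matrix.mul_apply, Fin.sum_univ_six, Matrix.vecHead, Matrix.vecTail]
        try ring
  have h3 : srcB a b ^ 3 = 0 := by
    rw [pow_succ, hsq]
    ext i j
    fin_cases i <;> fin_cases j <;>
      simp [srcB, Matrix.mul_apply, Fin.sum_univ_six, Matrix.vecHead, Matrix.vecTail]
  rw [exp_of_cube_eq_zero (srcB a b) h3, hsq]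
  ext i j
  fin_cases i <;> fin_cases j <;>
    · simp [srcB, ExpM, Matrix.add_apply, Matrix.smul_apply, Matrix.one_apply,
        Matrix.vecHead, Matrix.vecTail]
      try ring
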